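/- Let F be a finite extension of ℚ_p with p odd, so that ℤ_p embeds canonically in the valuation ring O of F, and let λ be a nontrivial continuous character of the additive group of F. Let s ∈ ℤ_p× and let σ be a field automorphism of ℂ such that σ(z) = z^r whenever z is a value of λ satisfying z^{p^n} = 1 and r is an integer with r ≡ s (mod p^n ℤ_p). Then σ(λ(t)) = λ(s t) for every t ∈ F, i.e. σ ∘ λ = λ[s]. -/

import Mathlib

open Complex Real

/-- If `z` lies on the unit circle and `z ≠ 1`, some natural power of `z` has
nonpositive real part. -/
lemma exists_pow_re_nonpos (z : ℂ) (hz : ‖z‖ = 1) (hne : z ≠ 1) :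
    ∃ m : ℕ, (z ^ m).re ≤ 0 := by
  have harg : z = Complex.exp (z.arg * Complex.I) := by
    conv_lhs => rw [← Complex.norm_mul_exp_arg_mul_I z]
    rw [hz, Complex.ofReal_one, one_mul]
  set θ : ℝ := |z.arg| with hθdef
  have hθpos : 0 < θ := by
    rw [hθdef, abs_pos]
    intro h
    exact hne (by rw [harg, h]; simp)
  have hθle : θ ≤ π := Complex.abs_arg_le_pi z
  set m : ℕ := ⌈π / (2 * θ)⌉₊ with hm
  refine ⟨m, ?_⟩
  have hle : π / (2 * θ) ≤ (m : ℝ) := Nat.le_ceil _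
  have hlt : (m : ℝ) < π / (2 * θ) + 1 :=
    Nat.ceil_lt_add_one (le_of_lt (div_pos Real.pi_pos (by positivity)))
  have h1 : π / 2 ≤ (m : ℝ) * θ := by
    have := mul_le_mul_of_nonneg_right hle hθpos.le
    rw [div_mul_eq_mul_div, mul_comm] at this
    calc π / 2 = θ * π / (2 * θ) := by field_simp
    _ ≤ (m:ℝ) * θ := this
  have h2 : (m : ℝ) * θ ≤ π + π / 2 := by
    have := mul_lt_mul_of_pos_right hlt hθpos
    have hd : π / (2 * θ) * θ = π / 2 := by field_simp
    nlinarith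
  have hcast : (m : ℂ) * ((z.arg : ℂ) * Complex.I) = (((m : ℝ) * z.arg : ℝ) : ℂ) * Complex.I := by
    push_cast; ring
  have hre : (z ^ m).re = Real.cos ((m : ℝ) * z.arg) := by
    conv_lhs => rw [harg]
    rw [← Complex.exp_nat_mul, hcast, Complex.exp_ofReal_mul_I_re]
  rw [hre]
  have : Real.cos ((m : ℝ) * z.arg) = Real.cos ((m : ℝ) * θ) := by
    rw [← Real.cos_abs ((m:ℝ) * z.arg), abs_mul, Nat.abs_cast]
  rw [this]
  exact Real.cos_nonpos_of_pi_div_two_le_of_le h1 h2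

/-- Let `F` be a finite extension of `ℚ_p`, `p` odd, and `λ` a
nontrivial continuous unitary character of `F⁺`.  Let `s ∈ ℤ_p×` and let `σ` be a field
automorphism of `ℂ` such that `σ z = z ^ r` whenever `z` is a value of `λ` with
`z ^ (p ^ n) = 1` and `r` is an integer with `r ≡ s (mod p^n ℤ_p)`.  Then
`σ (λ t) = λ (s t)` for all `t ∈ F`, i.e. `σ ∘ λ = λ[s]`. -/
theorem galois_action_on_character_eq_scaled_character
    (p : ℕ) [Fact p.Prime] (hodd : Odd p)
    (F : Type*) [NormedField F] [NormedAlgebra ℚ_[p] F] [FiniteDimensional ℚ_[p] F]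
    (lam : AddChar F ℂ) (hcont : Continuous ⇑lam)
    (habs : ∀ x : F, ‖lam x‖ = 1)
    (hnontriv : ∃ x : F, lam x ≠ 1)
    (s : ℤ_[p]ˣ) (σ : ℂ ≃+* ℂ)
    (hσ : ∀ (z : ℂ) (n : ℕ) (r : ℤ), z ∈ Set.range ⇑lam → z ^ (p ^ n) = 1 →
      ((r : ℤ_[p]) - ((s : ℤ_[p]ˣ) : ℤ_[p])) ∈ Ideal.span {((p : ℤ_[p]) ^ n)} →
      σ z = z ^ r) :
    ∀ t : F, σ (lam t) = lam ((algebraMap ℚ_[p] F (((s : ℤ_[p]ˣ) : ℤ_[p]) : ℚ_[p])) * t) := by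
  intro t
  have hp1 : (1 : ℝ) < p := by exact_mod_cast (Fact.out : p.Prime).one_lt
  -- continuity at 0: values of lam at small arguments are close to 1
  obtain ⟨δ, hδpos, hδ⟩ : ∃ δ > 0, ∀ x : F, ‖x‖ < δ → ‖lam x - 1‖ < 1/2 := by
    have h0 : lam (0 : F) = 1 := by simp
    have := Metric.continuousAt_iff.mp (hcont.continuousAt (x := (0:F)))
    obtain ⟨δ, hδpos, hδ⟩ := this (1/2) (by norm_num)
    refine ⟨δ, hδpos, fun x hx => ?_⟩
    have := hδ (by simpa using hx : dist x 0 < δ)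
    rw [h0] at this
    simpa [Complex.dist_eq] using this
  -- key claim: choose n such that lam kills (p^n * a) • t for all a ∈ ℤ_p
  obtain ⟨n, hn⟩ : ∃ n : ℕ, ∀ a : ℤ_[p],
      lam ((((p : ℚ_[p]) ^ n * (a : ℚ_[p]))) • t) = 1 := by
    obtain ⟨n, hnlt⟩ : ∃ n : ℕ, ((p : ℝ)⁻¹) ^ n < δ / (‖t‖ + 1) := by
      apply exists_pow_lt_of_lt_one (by positivity)
      rw [inv_lt_one_iff₀]; right; exact hp1
    refine ⟨n, fun a => ?_⟩
    -- every element of the form (p^n * b) • t has small norm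
    have hsmall : ∀ b : ℤ_[p], ‖(((p : ℚ_[p]) ^ n * (b : ℚ_[p]))) • t‖ < δ := by
      intro b
      calc ‖(((p : ℚ_[p]) ^ n * (b : ℚ_[p]))) • t‖
          ≤ ‖(p : ℚ_[p]) ^ n * (b : ℚ_[p])‖ * ‖t‖ := norm_smul_le _ _
        _ ≤ ((p : ℝ)⁻¹) ^ n * ‖t‖ := by
            have hb : ‖(b : ℚ_[p])‖ ≤ 1 := by
              rw [PadicInt.padic_norm_e_of_padicInt]; exact b.norm_le_one
            have hkey : ‖(p : ℚ_[p]) ^ n * (b : ℚ_[p])‖ ≤ ((p:ℝ)⁻¹) ^ n := by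
              rw [norm_mul, norm_pow, Padic.norm_p]
              have hpn : (0:ℝ) ≤ ((p:ℝ)⁻¹) ^ n := by positivity
              nlinarith [norm_nonneg ((b : ℚ_[p]))]
            exact mul_le_mul_of_nonneg_right hkey (norm_nonneg t)
        _ ≤ ((p : ℝ)⁻¹) ^ n * (‖t‖ + 1) := by
            apply mul_le_mul_of_nonneg_left (by linarith [norm_nonneg t]) (by positivity)
        _ < δ := by
            rw [← lt_div_iff₀ (by positivity)] at *
            exact hnlt
    set x : F := (((p : ℚ_[p]) ^ n * (a : ℚ_[p]))) • t with hx
    set z : ℂ := lam x with hz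
    by_contra hne
    obtain ⟨m, hm⟩ := exists_pow_re_nonpos z (habs _) hne
    -- but z^m = lam of another small element, so its re is positive
    have hzm : z ^ m = lam ((((p : ℚ_[p]) ^ n * (((m : ℤ_[p]) * a : ℤ_[p]) : ℚ_[p]))) • t) := by
      rw [hz, ← AddChar.map_nsmul_eq_pow]
      congr 1
      rw [hx, ← Nat.cast_smul_eq_nsmul ℚ_[p], smul_smul]
      push_cast
      ring_nf
    have hrepos : ∀ y : F, ‖y‖ < δ → (0:ℝ) < (lam y).re := by
      intro y hy
      have h1 := hδ y hy
      have h2 : |(lam y - 1).re| ≤ ‖lam y - 1‖ := Complex.abs_re_le_norm _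
      have h3 : (lam y - 1).re = (lam y).re - 1 := by simp
      have := abs_le.mp h2
      linarith [this.1]
    have := hrepos _ (hsmall ((m : ℤ_[p]) * a))
    rw [← hzm] at this
    linarith
  -- p^n-th power of lam t is 1
  have hroot : (lam t) ^ (p ^ n) = 1 := by
    have := hn 1
    rw [← AddChar.map_nsmul_eq_pow]
    rw [← Nat.cast_smul_eq_nsmul ℚ_[p]]
    simpa using this
  -- choose the integer approximation r of s
  set r : ℕ := PadicInt.appr ((s : ℤ_[p]ˣ) : ℤ_[p]) n with hr
  have hspec : ((s : ℤ_[p]ˣ) : ℤ_[p]) - r ∈ Ideal.span {(p : ℤ_[p]) ^ n} :=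
    PadicInt.appr_spec n _
  have hmem : (((r : ℤ) : ℤ_[p]) - ((s : ℤ_[p]ˣ) : ℤ_[p])) ∈ Ideal.span {(p : ℤ_[p]) ^ n} := by
    have : (((r : ℤ) : ℤ_[p]) - ((s : ℤ_[p]ˣ) : ℤ_[p])) =
        -(((s : ℤ_[p]ˣ) : ℤ_[p]) - r) := by push_cast; ring
    rw [this]
    exact neg_mem hspec
  have hσlam : σ (lam t) = lam t ^ (r : ℤ) :=
    hσ (lam t) n (r : ℤ) ⟨t, rfl⟩ hroot hmem
  -- decompose s = r + (s - r) with s - r ∈ p^n ℤ_p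
  obtain ⟨u, hu⟩ := Ideal.mem_span_singleton'.mp hspec
  -- hu : u * (p^n) = s - r
  have hdecomp : ((((s : ℤ_[p]ˣ) : ℤ_[p]) : ℚ_[p])) = (r : ℚ_[p]) + (p : ℚ_[p]) ^ n * (u : ℚ_[p]) := by
    have : ((s : ℤ_[p]ˣ) : ℤ_[p]) = (r : ℤ_[p]) + (p : ℤ_[p]) ^ n * u := by
      rw [mul_comm] at hu
      linear_combination -hu
    calc ((((s : ℤ_[p]ˣ) : ℤ_[p]) : ℚ_[p])) = (((r : ℤ_[p]) + (p : ℤ_[p]) ^ n * u : ℤ_[p]) : ℚ_[p]) := by rw [← this]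
      _ = (r : ℚ_[p]) + (p : ℚ_[p]) ^ n * (u : ℚ_[p]) := by push_cast; ring
  rw [hσlam, ← Algebra.smul_def, hdecomp, add_smul, AddChar.map_add_eq_mul]
  have h1 : lam ((r : ℚ_[p]) • t) = lam t ^ r := by
    rw [Nat.cast_smul_eq_nsmul, AddChar.map_nsmul_eq_pow]
  have h2 : lam (((p : ℚ_[p]) ^ n * (u : ℚ_[p])) • t) = 1 := hn u
  rw [h1, h2, mul_one, zpow_natCast]
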